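/- Let m and n be coprime. The number of affine permutations w ∈ affine S_n such that w^{-1} lies in the Sommers region S_m^n is m^{n−1}. -/

import Mathlib

structure AffinePerm (n : ℕ) where
  toEquiv : ℤ ≃ ℤ
  shift : ∀ i : ℤ, toEquiv (i + (n : ℤ)) = toEquiv i + (n : ℤ)
  sum_one_line : (∑ i ∈ Finset.Icc (1 : ℤ) (n : ℤ), toEquiv i) = ((n : ℤ) * (n + 1)) / 2

namespace SommersAux

variable {n : ℕ}

theorem AffinePerm.ext' {w₁ w₂ : AffinePerm n} (h : w₁.toEquiv = w₂.toEquiv) : w₁ = w₂ := by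
  cases w₁; cases w₂; simp_all

theorem shift_back (w : AffinePerm n) (i : ℤ) :
    w.toEquiv (i - (n : ℤ)) = w.toEquiv i - (n : ℤ) := by
  have := w.shift (i - n)
  simp at this
  omega

theorem shift_int (w : AffinePerm n) (i c : ℤ) :
    w.toEquiv (i + c * n) = w.toEquiv i + c * n := by
  induction c using Int.induction_on with
  | zero => simp
  | succ k ih =>
      have e : i + ((k:ℤ)+1) * n = (i + k*n) + n := by ring
      rw [e, w.shift, ih]; ring
  | pred k ih =>
      have e : i + (-(k:ℤ)-1) * n = (i + (-(k:ℤ))*n) - n := by ring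
      rw [e, shift_back, ih]; ring

theorem symm_shift (w : AffinePerm n) (x : ℤ) :
    w.toEquiv.symm (x + n) = w.toEquiv.symm x + n := by
  apply w.toEquiv.injective
  rw [Equiv.apply_symm_apply, w.shift, Equiv.apply_symm_apply]

theorem periodic_int (f : ℤ → ℤ) (hf : ∀ x, f (x + n) = f x) (x c : ℤ) :
    f (x + c * n) = f x := by
  have hb : ∀ y, f (y - n) = f y := by
    intro y
    have := hf (y - n)
    simp at this
    omega
  induction c using Int.induction_on with
  | zero => simp
  | succ k ih =>
      have e : x + ((k:ℤ)+1) * n = (x + k*n) + n := by ring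
      rw [e, hf, ih]
  | pred k ih =>
      have e : x + (-(k:ℤ)-1) * n = (x + (-(k:ℤ))*n) - n := by ring
      rw [e, hb, ih]

theorem periodic_congr (f : ℤ → ℤ) (hf : ∀ x, f (x + n) = f x) {x y : ℤ}
    (h : (n : ℤ) ∣ y - x) : f x = f y := by
  obtain ⟨c, hc⟩ := h
  have : y = x + c * n := by rw [mul_comm]; omega
  rw [this, periodic_int f hf]

theorem sum_res (hn : 0 < n) (f : ℤ → ℤ) (hf : ∀ x, f (x + n) = f x)
    (s : Finset ℤ) (hcard : s.card = n)
    (hres : ∀ x ∈ s, ∀ y ∈ s, (n : ℤ) ∣ y - x → x = y) :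
    ∑ x ∈ s, f x = ∑ x ∈ Finset.Icc (1 : ℤ) (n : ℤ), f x := by
  have npos : (0:ℤ) < n := by exact_mod_cast hn
  have key : ∀ t : Finset ℤ, t.card = n →
      (∀ x ∈ t, ∀ y ∈ t, (n : ℤ) ∣ y - x → x = y) →
      ∑ x ∈ t, f x = ∑ y ∈ Finset.Ico (0 : ℤ) (n : ℤ), f y := by
    intro t htc htr
    have hinj : ∀ x ∈ t, ∀ y ∈ t, x % (n:ℤ) = y % (n:ℤ) → x = y := by
      intro x hx y hy hxy
      exact htr x hx y hy (Int.ModEq.dvd hxy)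
    have him : Finset.image (fun x => x % (n:ℤ)) t = Finset.Ico (0:ℤ) (n:ℤ) := by
      apply Finset.eq_of_subset_of_card_le
      · intro z hz
        simp only [Finset.mem_image] at hz
        obtain ⟨x, _, rfl⟩ := hz
        simp only [Finset.mem_Ico]
        exact ⟨Int.emod_nonneg x (by omega), Int.emod_lt_of_pos x npos⟩
      · rw [Finset.card_image_of_injOn hinj, htc, Int.card_Ico]
        simp
    calc ∑ x ∈ t, f x = ∑ x ∈ t, f (x % (n:ℤ)) := by
            apply Finset.sum_congr rfl
            intro x hx
            exact (periodic_congr f hf (Int.dvd_self_sub_of_emod_eq (rfl))).symm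
      _ = ∑ z ∈ Finset.image (fun x => x % (n:ℤ)) t, f z := (Finset.sum_image hinj).symm
      _ = ∑ y ∈ Finset.Ico (0 : ℤ) (n : ℤ), f y := by rw [him]
  have hIcc : (Finset.Icc (1:ℤ) (n:ℤ)).card = n := by
    simp [Int.card_Icc]
  have hIccres : ∀ x ∈ Finset.Icc (1:ℤ) (n:ℤ), ∀ y ∈ Finset.Icc (1:ℤ) (n:ℤ),
      (n : ℤ) ∣ y - x → x = y := by
    intro x hx y hy hdvd
    simp only [Finset.mem_Icc] at hx hy
    have := Int.eq_zero_of_abs_lt_dvd hdvd (abs_lt.mpr ⟨by omega, by omega⟩)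
    omega
  rw [key s hcard hres, key _ hIcc hIccres]

theorem gauss_icc (n : ℕ) : 2 * ∑ i ∈ Finset.Icc (1 : ℤ) (n : ℤ), i = n * (n + 1) := by
  induction n with
  | zero => simp
  | succ k ih =>
      have hins : Finset.Icc (1:ℤ) ((k:ℤ)+1) = insert ((k:ℤ)+1) (Finset.Icc (1:ℤ) (k:ℤ)) := by
        ext x
        simp only [Finset.mem_Icc, Finset.mem_insert]
        omega
      push_cast
      rw [hins, Finset.sum_insert (by simp)]
      push_cast at ih
      ring_nf
      ring_nf at ih
      omega

theorem sum_symm_sub (hn : 0 < n) (w : AffinePerm n) :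
    ∑ i ∈ Finset.Icc (1 : ℤ) (n : ℤ), (w.toEquiv.symm i - i) = 0 := by
  set f : ℤ → ℤ := fun x => w.toEquiv.symm x - x with hfdef
  have hf : ∀ x, f (x + n) = f x := by
    intro x; simp only [hfdef, symm_shift]; ring
  set s : Finset ℤ := Finset.image (fun i => w.toEquiv i) (Finset.Icc (1:ℤ) (n:ℤ)) with hsdef
  have hinjw : ∀ x ∈ Finset.Icc (1:ℤ) (n:ℤ), ∀ y ∈ Finset.Icc (1:ℤ) (n:ℤ),
      w.toEquiv x = w.toEquiv y → x = y := fun x _ y _ h => w.toEquiv.injective h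
  have hcard : s.card = n := by
    rw [hsdef, Finset.card_image_of_injOn hinjw]
    simp [Int.card_Icc]
  have hres : ∀ x ∈ s, ∀ y ∈ s, (n : ℤ) ∣ y - x → x = y := by
    intro x hx y hy hdvd
    simp only [hsdef, Finset.mem_image] at hx hy
    obtain ⟨i, hi, rfl⟩ := hx
    obtain ⟨j, hj, rfl⟩ := hy
    obtain ⟨c, hc⟩ := hdvd
    have hwj : w.toEquiv j = w.toEquiv (i + c * n) := by
      rw [shift_int, mul_comm]; omega
    have hij : j = i + c * n := w.toEquiv.injective hwj
    simp only [Finset.mem_Icc] at hi hj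
    have hc0 : c = 0 := by
      rcases lt_trichotomy c 0 with h | h | h
      · nlinarith
      · exact h
      · nlinarith
    rw [hij, hc0]; ring_nf
  have h1 : ∑ x ∈ s, f x = ∑ x ∈ Finset.Icc (1:ℤ) (n:ℤ), f x := sum_res hn f hf s hcard hres
  have h2 : ∑ x ∈ s, f x = ∑ i ∈ Finset.Icc (1:ℤ) (n:ℤ), (i - w.toEquiv i) := by
    rw [hsdef, Finset.sum_image hinjw]
    apply Finset.sum_congr rfl
    intro i _
    simp [hfdef]
  have h3 : ∑ i ∈ Finset.Icc (1:ℤ) (n:ℤ), (i - w.toEquiv i) = 0 := by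
    rw [Finset.sum_sub_distrib, w.sum_one_line]
    have hg := gauss_icc n
    omega
  show ∑ i ∈ Finset.Icc (1:ℤ) (n:ℤ), f i = 0
  rw [← h1, h2, h3]

theorem symm_sum (hn : 0 < n) (w : AffinePerm n) :
    ∑ i ∈ Finset.Icc (1 : ℤ) (n : ℤ), w.toEquiv.symm i = ((n : ℤ) * (n + 1)) / 2 := by
  have h := sum_symm_sub hn w
  rw [Finset.sum_sub_distrib] at h
  have := gauss_icc n
  omega

def invPerm (hn : 0 < n) (w : AffinePerm n) : AffinePerm n :=
  ⟨w.toEquiv.symm, symm_shift w, symm_sum hn w⟩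

theorem invPerm_invPerm (hn : 0 < n) (w : AffinePerm n) : invPerm hn (invPerm hn w) = w :=
  AffinePerm.ext' (by simp [invPerm])

variable {m : ℕ}

theorem cond_iff_mstable (hm : 0 < m) (w : AffinePerm n) :
    (∀ i j : ℤ, i < j → w.toEquiv i - w.toEquiv j ≠ (m : ℤ)) ↔
    (∀ b : ℤ, w.toEquiv.symm b < w.toEquiv.symm (b + m)) := by
  constructor
  · intro hc b
    by_contra h
    push_neg at h
    have hne : w.toEquiv.symm (b + m) ≠ w.toEquiv.symm b := by
      intro he
      have := w.toEquiv.symm.injective he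
      have : (m:ℤ) = 0 := by omega
      omega
    have hlt : w.toEquiv.symm (b + m) < w.toEquiv.symm b := lt_of_le_of_ne h hne
    have := hc _ _ hlt
    simp only [Equiv.apply_symm_apply] at this
    omega
  · intro hs i j hij hc
    have hb := hs (w.toEquiv j)
    rw [show w.toEquiv j + (m:ℤ) = w.toEquiv i by omega] at hb
    simp only [Equiv.symm_apply_apply] at hb
    omega

theorem bezout (hcop : Nat.Coprime m n) : ∃ a b : ℤ, a * m + b * n = 1 := by
  have h : IsCoprime (m : ℤ) (n : ℤ) := by
    rw [Nat.isCoprime_iff_coprime]; exact hcop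
  obtain ⟨a, b, hab⟩ := h
  exact ⟨a, b, by linarith⟩

theorem coprime_nm (hcop : Nat.Coprime m n) : IsCoprime (n : ℤ) (m : ℤ) := by
  obtain ⟨a, b, hab⟩ := bezout hcop
  exact ⟨b, a, by linarith⟩

theorem dvd_cancel_m (hcop : Nat.Coprime m n) {c : ℤ} (h : (n:ℤ) ∣ c * m) : (n:ℤ) ∣ c :=
  (coprime_nm hcop).dvd_of_dvd_mul_right h

/-- residue index: `K n a x` is the unique `k` in `[0,n)` with `x = k*m (mod n)`. -/
def K (n : ℕ) (a : ℤ) (x : ℤ) : ℤ := (x * a) % (n : ℤ)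

theorem K_nonneg (hn : 0 < n) (a x : ℤ) : 0 ≤ K n a x :=
  Int.emod_nonneg _ (by exact_mod_cast hn.ne')

theorem K_lt (hn : 0 < n) (a x : ℤ) : K n a x < n :=
  Int.emod_lt_of_pos _ (by exact_mod_cast hn)

theorem K_dvd {a : ℤ} (ha : (n:ℤ) ∣ a * m - 1) (x : ℤ) : (n:ℤ) ∣ x - K n a x * m := by
  obtain ⟨c, hc⟩ := ha
  obtain ⟨d, hd⟩ : (n:ℤ) ∣ (x * a - (x * a) % (n:ℤ)) := Int.dvd_self_sub_of_emod_eq rfl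
  refine ⟨-(x * c) + d * m, ?_⟩
  have hKx : K n a x = x * a - (n:ℤ) * d := by
    unfold K; omega
  rw [hKx]
  linear_combination (-x) * hc

theorem K_unique (hn : 0 < n) (hcop : Nat.Coprime m n) {a : ℤ} (ha : (n:ℤ) ∣ a * m - 1)
    {k x : ℤ} (hk0 : 0 ≤ k) (hkn : k < n) (hd : (n:ℤ) ∣ x - k * m) :
    k = K n a x := by
  have h1 : (n:ℤ) ∣ (K n a x - k) * m := by
    have h0 := K_dvd ha x
    have h2 : (K n a x - k) * m = (x - k * m) - (x - K n a x * m) := by ring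
    rw [h2]
    exact dvd_sub hd h0
  have h3 : (n:ℤ) ∣ (K n a x - k) := dvd_cancel_m hcop h1
  have h4 := K_nonneg hn a x
  have h5 := K_lt hn a x
  have := Int.eq_zero_of_abs_lt_dvd h3 (abs_lt.mpr ⟨by omega, by omega⟩)
  omega

theorem shift_dvd (u : AffinePerm n) {x d : ℤ} (hd : (n:ℤ) ∣ d) :
    u.toEquiv (x + d) = u.toEquiv x + d := by
  obtain ⟨c, hc⟩ := hd
  subst hc
  rw [mul_comm (n:ℤ) c]
  exact shift_int u x c

theorem res_km (hcop : Nat.Coprime m n) {k l : ℕ} (hk : k < n) (hl : l < n)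
    (h : (n:ℤ) ∣ ((k:ℤ) * m - (l:ℤ) * m)) : k = l := by
  have h1 : (n:ℤ) ∣ ((k:ℤ) - l) * m := by rw [sub_mul]; exact h
  have h2 := dvd_cancel_m hcop h1
  have := Int.eq_zero_of_abs_lt_dvd h2 (abs_lt.mpr ⟨by omega, by omega⟩)
  omega

theorem sum_u_km (hm : 0 < m) (hn : 0 < n) (hcop : Nat.Coprime m n) (u : AffinePerm n) :
    ∑ k ∈ Finset.range n, u.toEquiv ((k:ℤ) * m)
      = (∑ k ∈ Finset.range n, (k:ℤ)) * m := by
  set f : ℤ → ℤ := fun x => u.toEquiv x - x with hfdef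
  have hf : ∀ x, f (x + n) = f x := by
    intro x; simp only [hfdef, u.shift]; ring
  have hinj : ∀ x ∈ Finset.range n, ∀ y ∈ Finset.range n,
      (fun k : ℕ => (k:ℤ) * m) x = (fun k : ℕ => (k:ℤ) * m) y → x = y := by
    intro x _ y _ h
    simp only at h
    have : (x:ℤ) = y := by
      have hm' : (0:ℤ) < m := by exact_mod_cast hm
      exact mul_right_cancel₀ hm'.ne' h
    exact_mod_cast this
  set s : Finset ℤ := Finset.image (fun k : ℕ => (k:ℤ) * m) (Finset.range n) with hsdef
  have hcard : s.card = n := by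
    rw [hsdef, Finset.card_image_of_injOn hinj, Finset.card_range]
  have hres : ∀ x ∈ s, ∀ y ∈ s, (n : ℤ) ∣ y - x → x = y := by
    intro x hx y hy hdvd
    simp only [hsdef, Finset.mem_image, Finset.mem_range] at hx hy
    obtain ⟨k, hk, rfl⟩ := hx
    obtain ⟨l, hl, rfl⟩ := hy
    have : l = k := res_km hcop hl hk (by simpa using hdvd)
    rw [this]
  have h1 : ∑ x ∈ s, f x = ∑ x ∈ Finset.Icc (1:ℤ) (n:ℤ), f x := sum_res hn f hf s hcard hres
  have h2 : ∑ x ∈ s, f x = ∑ k ∈ Finset.range n, f ((k:ℤ) * m) := by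
    rw [hsdef, Finset.sum_image hinj]
  have h3 : ∑ x ∈ Finset.Icc (1:ℤ) (n:ℤ), f x = 0 := by
    simp only [hfdef, Finset.sum_sub_distrib, u.sum_one_line]
    have := gauss_icc n
    omega
  have h4 : ∑ k ∈ Finset.range n, f ((k:ℤ) * m) = 0 := by rw [← h2, h1, h3]
  simp only [hfdef, Finset.sum_sub_distrib] at h4
  rw [Finset.sum_mul]
  omega

theorem tau_lt (hm : 0 < m) (u : AffinePerm n)
    (hu : ∀ b : ℤ, u.toEquiv b < u.toEquiv (b + m)) :
    ∀ {k l : ℤ}, k < l → u.toEquiv (k * m) < u.toEquiv (l * m) := by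
  have hsm : StrictMono (fun k : ℤ => u.toEquiv (k * m)) := by
    apply strictMono_int_of_lt_succ
    intro k
    have h := hu (k * m)
    simpa [show (k+1) * (m:ℤ) = k * m + m by ring] using h
  intro k l h
  exact hsm h

/-- Sum of a periodic function over `{k*m : k ∈ [0,n)}` equals sum over `Icc 1 n`. -/
theorem sum_km_eq (hm : 0 < m) (hn : 0 < n) (hcop : Nat.Coprime m n)
    (f : ℤ → ℤ) (hf : ∀ x, f (x + n) = f x) :
    ∑ k ∈ Finset.range n, f ((k:ℤ) * m) = ∑ x ∈ Finset.Icc (1:ℤ) (n:ℤ), f x := by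
  have hinj : ∀ x ∈ Finset.range n, ∀ y ∈ Finset.range n,
      (fun k : ℕ => (k:ℤ) * m) x = (fun k : ℕ => (k:ℤ) * m) y → x = y := by
    intro x _ y _ h
    simp only at h
    have hm' : (0:ℤ) < m := by exact_mod_cast hm
    have : (x:ℤ) = y := mul_right_cancel₀ hm'.ne' h
    exact_mod_cast this
  set s : Finset ℤ := Finset.image (fun k : ℕ => (k:ℤ) * m) (Finset.range n) with hsdef
  have hcard : s.card = n := by
    rw [hsdef, Finset.card_image_of_injOn hinj, Finset.card_range]
  have hres : ∀ x ∈ s, ∀ y ∈ s, (n : ℤ) ∣ y - x → x = y := by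
    intro x hx y hy hdvd
    simp only [hsdef, Finset.mem_image, Finset.mem_range] at hx hy
    obtain ⟨k, hk, rfl⟩ := hx
    obtain ⟨l, hl, rfl⟩ := hy
    have : l = k := res_km hcop hl hk (by simpa using hdvd)
    rw [this]
  rw [← sum_res hn f hf s hcard hres, hsdef, Finset.sum_image hinj]

theorem card_step2 (hm : 0 < m) (hn : 0 < n) (hcop : Nat.Coprime m n) :
    Nat.card {u : AffinePerm n // ∀ b : ℤ, u.toEquiv b < u.toEquiv (b + m)}
      = Nat.card {t : Fin n → ℤ //
          (∀ k l : Fin n, k < l → t k < t l) ∧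
          (∀ k l : Fin n, t k - t l < (n:ℤ) * m) ∧
          (∀ k l : Fin n, (n:ℤ) ∣ (t k - t l) → k = l) ∧
          (∑ k, t k = (∑ k ∈ Finset.range n, (k:ℤ)) * m)} := by
  obtain ⟨a, bz, hab⟩ := bezout hcop
  have ha : (n:ℤ) ∣ a * m - 1 := ⟨-bz, by linarith⟩
  have hK_eq : ∀ x y : ℤ, (n:ℤ) ∣ x - y → K n a x = K n a y := by
    intro x y hxy
    have h1 : (n:ℤ) ∣ x - K n a y * m := by
      have := K_dvd (n := n) (m := m) ha y
      have e : x - K n a y * m = (x - y) + (y - K n a y * m) := by ring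
      rw [e]; exact dvd_add hxy this
    exact (K_unique hn hcop ha (K_nonneg hn a y) (K_lt hn a y) h1).symm
  refine Nat.card_eq_of_bijective
    (fun u => ⟨fun k => u.1.toEquiv ((k.1:ℤ) * m), ?_⟩) ⟨?_, ?_⟩
  · obtain ⟨u, hu⟩ := u
    refine ⟨?_, ?_, ?_, ?_⟩
    · intro k l hkl
      exact tau_lt hm u hu (by exact_mod_cast (Fin.lt_def.mp hkl))
    · intro k l
      show u.toEquiv ((k.1:ℤ) * m) - u.toEquiv ((l.1:ℤ) * m) < (n:ℤ) * m
      have h1 : u.toEquiv ((k.1:ℤ) * m) < u.toEquiv (((l.1:ℤ) + n) * m) :=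
        tau_lt hm u hu (by have := k.2; exact_mod_cast (by omega : (k.1:ℤ) < (l.1:ℤ) + n))
      have h2 : u.toEquiv (((l.1:ℤ) + n) * m) = u.toEquiv ((l.1:ℤ) * m) + m * n := by
        rw [show ((l.1:ℤ) + n) * m = (l.1:ℤ) * m + (m:ℤ) * n by ring, shift_int]
      have hc : (m:ℤ) * n = n * m := by ring
      omega
    · intro k l hdvd
      replace hdvd : (n:ℤ) ∣ u.toEquiv ((k.1:ℤ) * m) - u.toEquiv ((l.1:ℤ) * m) := hdvd
      obtain ⟨c, hcc⟩ := hdvd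
      have e1 : u.toEquiv ((k.1:ℤ) * m) = u.toEquiv ((l.1:ℤ) * m + (n:ℤ) * c) := by
        rw [shift_dvd u ⟨c, rfl⟩]; omega
      have e2 := u.toEquiv.injective e1
      have e3 : (n:ℤ) ∣ (k.1:ℤ) * m - (l.1:ℤ) * m := ⟨c, by omega⟩
      exact Fin.ext (res_km hcop k.2 l.2 e3)
    · rw [Fin.sum_univ_eq_sum_range (fun k => u.toEquiv ((k:ℤ) * m)) n]
      exact sum_u_km hm hn hcop u
  · -- injectivity
    intro u₁ u₂ he
    have hx : ∀ k : Fin n, u₁.1.toEquiv ((k.1:ℤ) * m) = u₂.1.toEquiv ((k.1:ℤ) * m) := by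
      intro k
      exact congrFun (congrArg Subtype.val he) k
    apply Subtype.ext
    apply AffinePerm.ext'
    apply Equiv.ext
    intro x
    have hk0 := K_nonneg hn a x
    have hkn := K_lt hn a x
    have hkd := K_dvd (n := n) (m := m) ha x
    set kx : Fin n := ⟨(K n a x).toNat, by omega⟩ with hkx
    have hkxv : ((kx.1 : ℕ) : ℤ) = K n a x := by simp [hkx]; omega
    have hdecomp : ∀ w : AffinePerm n, w.toEquiv x = w.toEquiv ((kx.1:ℤ) * m) + (x - K n a x * m) := by
      intro w
      rw [hkxv, ← shift_dvd w hkd]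
      ring_nf
    rw [hdecomp u₁.1, hdecomp u₂.1, hx kx]
  · -- surjectivity
    rintro ⟨t, h1, h2, h3, h4⟩
    classical
    set kf : ℤ → Fin n := fun x => ⟨(K n a x).toNat, by
      have := K_lt hn a x; have := K_nonneg hn a x; omega⟩ with hkfdef
    have hkf : ∀ x, ((kf x).1 : ℤ) = K n a x := by
      intro x
      simp only [hkfdef]
      exact Int.toNat_of_nonneg (K_nonneg hn a x)
    set v : ℤ → ℤ := fun x => t (kf x) + (x - K n a x * m) with hvdef
    have hKkm : ∀ k : Fin n, K n a ((k.1:ℤ) * m) = (k.1:ℤ) := by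
      intro k
      exact (K_unique hn hcop ha (by positivity) (by exact_mod_cast k.2) ⟨0, by ring⟩).symm
    have hkfkm : ∀ k : Fin n, kf ((k.1:ℤ) * m) = k := by
      intro k
      apply Fin.ext
      have := hkf ((k.1:ℤ) * m)
      rw [hKkm k] at this
      exact_mod_cast this
    have hvk : ∀ k : Fin n, v ((k.1:ℤ) * m) = t k := by
      intro k
      simp only [hvdef, hkfkm k, hKkm k]
      ring
    have hvshift : ∀ x, v (x + n) = v x + n := by
      intro x
      have hKs : K n a (x + n) = K n a x := hK_eq _ _ ⟨1, by ring⟩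
      have hkfs : kf (x + n) = kf x := by
        apply Fin.ext
        have e1 := hkf (x + n)
        have e2 := hkf x
        rw [hKs] at e1
        omega
      simp only [hvdef, hkfs, hKs]
      ring
    have hvinj : Function.Injective v := by
      intro x y hxy
      simp only [hvdef] at hxy
      have hdx := K_dvd (n := n) (m := m) ha x
      have hdy := K_dvd (n := n) (m := m) ha y
      have hdt : (n:ℤ) ∣ t (kf x) - t (kf y) := by
        have e : t (kf x) - t (kf y) = (y - K n a y * m) - (x - K n a x * m) := by omega
        rw [e]; exact dvd_sub hdy hdx
      have hkeq : kf x = kf y := h3 _ _ hdt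
      have hKeq : K n a x = K n a y := by
        have := hkf x; have := hkf y; rw [hkeq] at *; omega
      rw [hkeq, hKeq] at hxy
      omega
    have hvsurj : Function.Surjective v := by
      intro y
      have hcov : ∃ k : Fin n, (n:ℤ) ∣ y - t k := by
        have hginj : Function.Injective (fun k : Fin n => t k % (n:ℤ)) := by
          intro k l hkl
          simp only at hkl
          exact h3 k l (Int.ModEq.dvd (hkl.symm))
        have hsub : Finset.image (fun k : Fin n => t k % (n:ℤ)) Finset.univ ⊆
            Finset.Ico (0:ℤ) (n:ℤ) := by
          intro z hz
          simp only [Finset.mem_image] at hz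
          obtain ⟨k, _, rfl⟩ := hz
          simp only [Finset.mem_Ico]
          have npos : (0:ℤ) < n := by exact_mod_cast hn
          exact ⟨Int.emod_nonneg _ npos.ne', Int.emod_lt_of_pos _ npos⟩
        have him : Finset.image (fun k : Fin n => t k % (n:ℤ)) Finset.univ =
            Finset.Ico (0:ℤ) (n:ℤ) := by
          apply Finset.eq_of_subset_of_card_le hsub
          rw [Finset.card_image_of_injective _ hginj, Int.card_Ico]
          simp
        have hy : y % (n:ℤ) ∈ Finset.Ico (0:ℤ) (n:ℤ) := by
          simp only [Finset.mem_Ico]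
          have npos : (0:ℤ) < n := by exact_mod_cast hn
          exact ⟨Int.emod_nonneg _ npos.ne', Int.emod_lt_of_pos _ npos⟩
        rw [← him] at hy
        simp only [Finset.mem_image] at hy
        obtain ⟨k, _, hk⟩ := hy
        exact ⟨k, Int.ModEq.dvd hk⟩
      obtain ⟨k, hkdvd⟩ := hcov
      refine ⟨(k.1:ℤ) * m + (y - t k), ?_⟩
      have hKx : K n a ((k.1:ℤ) * m + (y - t k)) = (k.1:ℤ) := by
        refine (K_unique hn hcop ha (by positivity) (by exact_mod_cast k.2) ?_).symm
        have e : (k.1:ℤ) * m + (y - t k) - (k.1:ℤ) * m = y - t k := by ring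
        rw [e]; exact hkdvd
      have hkfx : kf ((k.1:ℤ) * m + (y - t k)) = k := by
        apply Fin.ext
        have := hkf ((k.1:ℤ) * m + (y - t k))
        rw [hKx] at this
        exact_mod_cast this
      simp only [hvdef, hkfx, hKx]
      ring
    have hvbij : Function.Bijective v := ⟨hvinj, hvsurj⟩
    have hsum : ∑ i ∈ Finset.Icc (1:ℤ) (n:ℤ), v i = ((n:ℤ) * (n + 1)) / 2 := by
      set f : ℤ → ℤ := fun x => v x - x with hfdef
      have hf : ∀ x, f (x + n) = f x := by
        intro x; simp only [hfdef, hvshift]; ring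
      have e1 : ∑ k ∈ Finset.range n, f ((k:ℤ) * m) = ∑ x ∈ Finset.Icc (1:ℤ) (n:ℤ), f x :=
        sum_km_eq hm hn hcop f hf
      have e2 : ∑ k ∈ Finset.range n, f ((k:ℤ) * m) = 0 := by
        rw [← Fin.sum_univ_eq_sum_range (fun k => f ((k:ℤ) * m)) n]
        have e3 : ∀ k : Fin n, f ((k.1:ℤ) * m) = t k - (k.1:ℤ) * m := by
          intro k; simp only [hfdef, hvk k]
        rw [Finset.sum_congr rfl (fun k _ => e3 k), Finset.sum_sub_distrib, h4,
          Fin.sum_univ_eq_sum_range (fun k => (k:ℤ) * m) n, ← Finset.sum_mul]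
        ring
      have e4 : ∑ x ∈ Finset.Icc (1:ℤ) (n:ℤ), f x = 0 := by rw [← e1, e2]
      simp only [hfdef, Finset.sum_sub_distrib] at e4
      have := gauss_icc n
      omega
    have hmst : ∀ b : ℤ, v b < v (b + m) := by
      intro b
      have hb0 := K_nonneg hn a b
      have hbn := K_lt hn a b
      have hbd := K_dvd (n := n) (m := m) ha b
      by_cases hcase : K n a b + 1 < n
      · have hK1 : K n a (b + m) = K n a b + 1 := by
          refine (K_unique hn hcop ha (by omega) (by omega) ?_).symm
          have e : b + m - (K n a b + 1) * m = b - K n a b * m := by ring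
          rw [e]; exact hbd
        have hkf1 : ((kf (b + m)).1 : ℤ) = K n a b + 1 := by rw [hkf, hK1]
        have hlt : kf b < kf (b + m) := by
          rw [Fin.lt_def]
          have := hkf b
          omega
        have := h1 _ _ hlt
        simp only [hvdef, hK1]
        have e : b + m - (K n a b + 1) * m = b - K n a b * m := by ring
        omega
      · have hKb : K n a b = (n:ℤ) - 1 := by omega
        have hK0 : K n a (b + m) = 0 := by
          refine (K_unique hn hcop ha le_rfl (by exact_mod_cast hn) ?_).symm
          have e : b + m - 0 * m = (b - K n a b * m) + (n:ℤ) * m := by rw [hKb]; ring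
          rw [e]
          exact dvd_add hbd ⟨m, rfl⟩
        have hkf0 : kf (b + m) = ⟨0, hn⟩ := by
          apply Fin.ext
          show (kf (b + m)).1 = 0
          have := hkf (b + m)
          rw [hK0] at this
          omega
        have hwin := h2 (kf b) ⟨0, hn⟩
        simp only [hvdef, hkf0, hK0, hKb]
        have e1 : ((n:ℤ) - 1) * m = (n:ℤ) * m - m := by ring
        have e2 : (0:ℤ) * m = 0 := by ring
        omega
    refine ⟨⟨⟨Equiv.ofBijective v hvbij, hvshift, hsum⟩, ?_⟩, ?_⟩
    · intro b
      exact hmst b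
    · apply Subtype.ext
      funext k
      exact hvk k

theorem fin_eq_of_dvd {k l : Fin n} (h : (n:ℤ) ∣ (k.1:ℤ) - (l.1:ℤ)) : k = l := by
  have hk := k.2
  have hl := l.2
  have := Int.eq_zero_of_abs_lt_dvd h (abs_lt.mpr ⟨by omega, by omega⟩)
  exact Fin.ext (by omega)

/-- the residue index of `t k` : element of `Fin n` congruent to `t k` mod `n`. -/
def resIdx (hn : 0 < n) (t : Fin n → ℤ) : Fin n → Fin n := fun k =>
  ⟨(t k % (n:ℤ)).toNat, by
    have npos : (0:ℤ) < n := by exact_mod_cast hn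
    have h1 := Int.emod_nonneg (t k) npos.ne'
    have h2 := Int.emod_lt_of_pos (t k) npos
    omega⟩

theorem resIdx_dvd (hn : 0 < n) (t : Fin n → ℤ) (k : Fin n) :
    (n:ℤ) ∣ t k - ((resIdx hn t k).1 : ℤ) := by
  have npos : (0:ℤ) < n := by exact_mod_cast hn
  have h1 := Int.emod_nonneg (t k) npos.ne'
  have hv : ((resIdx hn t k).1 : ℤ) = t k % n := by
    simp only [resIdx]
    omega
  rw [hv]
  exact Int.dvd_self_sub_of_emod_eq rfl

theorem resIdx_inj (hn : 0 < n) (t : Fin n → ℤ)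
    (h3 : ∀ k l : Fin n, (n:ℤ) ∣ (t k - t l) → k = l) :
    Function.Injective (resIdx hn t) := by
  intro k l hkl
  apply h3
  have d1 := resIdx_dvd hn t k
  have d2 := resIdx_dvd hn t l
  rw [hkl] at d1
  have e : t k - t l = (t k - ((resIdx hn t l).1 : ℤ)) - (t l - ((resIdx hn t l).1 : ℤ)) := by
    ring
  rw [e]
  exact dvd_sub d1 d2

/-- sorting equivalence -/
noncomputable def sortEquiv (hn : 0 < n) (t : Fin n → ℤ)
    (h3 : ∀ k l : Fin n, (n:ℤ) ∣ (t k - t l) → k = l) : Fin n ≃ Fin n :=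
  Equiv.ofBijective (resIdx hn t) (Finite.injective_iff_bijective.mp (resIdx_inj hn t h3))

theorem sortEquiv_dvd (hn : 0 < n) (t : Fin n → ℤ)
    (h3 : ∀ k l : Fin n, (n:ℤ) ∣ (t k - t l) → k = l) (r : Fin n) :
    (n:ℤ) ∣ t ((sortEquiv hn t h3).symm r) - (r.1 : ℤ) := by
  set k := (sortEquiv hn t h3).symm r with hk
  have : resIdx hn t k = r := by
    rw [hk]
    exact (sortEquiv hn t h3).apply_symm_apply r
  rw [← this]
  exact resIdx_dvd hn t k

theorem card_step3 (hm : 0 < m) (hn : 0 < n) (hcop : Nat.Coprime m n) :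
    Nat.card {t : Fin n → ℤ //
          (∀ k l : Fin n, k < l → t k < t l) ∧
          (∀ k l : Fin n, t k - t l < (n:ℤ) * m) ∧
          (∀ k l : Fin n, (n:ℤ) ∣ (t k - t l) → k = l) ∧
          (∑ k, t k = (∑ k ∈ Finset.range n, (k:ℤ)) * m)}
      = Nat.card {T : Fin n → ℤ //
          (∀ r : Fin n, (n:ℤ) ∣ (T r - (r.1:ℤ))) ∧
          (∀ r s : Fin n, T r - T s < (n:ℤ) * m) ∧
          (∑ r, T r = (∑ k ∈ Finset.range n, (k:ℤ)) * m)} := by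
  classical
  refine Nat.card_eq_of_bijective
    (fun tt => ⟨fun r => tt.1 ((sortEquiv hn tt.1 tt.2.2.2.1).symm r), ?_⟩) ⟨?_, ?_⟩
  · obtain ⟨t, h1, h2, h3, h4⟩ := tt
    refine ⟨?_, ?_, ?_⟩
    · intro r
      exact sortEquiv_dvd hn t h3 r
    · intro r s
      exact h2 _ _
    · rw [Equiv.sum_comp (sortEquiv hn t h3).symm t]
      exact h4
  · -- injectivity
    rintro ⟨t₁, h11, h12, h13, h14⟩ ⟨t₂, h21, h22, h23, h24⟩ he
    have heT : (fun r => t₁ ((sortEquiv hn t₁ h13).symm r))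
        = (fun r => t₂ ((sortEquiv hn t₂ h23).symm r)) := congrArg Subtype.val he
    apply Subtype.ext
    show t₁ = t₂
    set T : Fin n → ℤ := fun r => t₁ ((sortEquiv hn t₁ h13).symm r) with hTdef
    have hTfun : ∀ r, T r = t₂ ((sortEquiv hn t₂ h23).symm r) := fun r => congrFun heT r
    have hTinj : Function.Injective T := by
      intro r s hrs
      have h := h13 ((sortEquiv hn t₁ h13).symm r) ((sortEquiv hn t₁ h13).symm s)
        (by rw [show t₁ ((sortEquiv hn t₁ h13).symm r) = T r from rfl,
                show t₁ ((sortEquiv hn t₁ h13).symm s) = T s from rfl, hrs]; simp)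
      have := congrArg (sortEquiv hn t₁ h13) h
      simpa using this
    have hs : (Finset.univ.image T).card = n := by
      rw [Finset.card_image_of_injective _ hTinj]; simp
    have ht₁mem : ∀ k, t₁ k ∈ Finset.univ.image T := by
      intro k
      refine Finset.mem_image.mpr ⟨(sortEquiv hn t₁ h13) k, Finset.mem_univ _, ?_⟩
      show t₁ ((sortEquiv hn t₁ h13).symm _) = t₁ k
      rw [Equiv.symm_apply_apply]
    have ht₂mem : ∀ k, t₂ k ∈ Finset.univ.image T := by
      intro k
      refine Finset.mem_image.mpr ⟨(sortEquiv hn t₂ h23) k, Finset.mem_univ _, ?_⟩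
      rw [hTfun, Equiv.symm_apply_apply]
    have hmono₁ : StrictMono t₁ := fun k l h => h11 k l h
    have hmono₂ : StrictMono t₂ := fun k l h => h21 k l h
    have e₁ := Finset.orderEmbOfFin_unique hs ht₁mem hmono₁
    have e₂ := Finset.orderEmbOfFin_unique hs ht₂mem hmono₂
    rw [e₁, e₂]
  · -- surjectivity
    rintro ⟨T, g1, g2, g3⟩
    have hTinj : Function.Injective T := by
      intro r s hrs
      apply fin_eq_of_dvd
      have d1 := g1 r
      have d2 := g1 s
      have e : (r.1:ℤ) - (s.1:ℤ) = (T s - (s.1:ℤ)) - (T r - (r.1:ℤ)) := by rw [hrs]; ring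
      rw [e]
      exact dvd_sub d2 d1
    set s : Finset ℤ := Finset.univ.image T with hsdef
    have hcard : s.card = n := by
      rw [hsdef, Finset.card_image_of_injective _ hTinj]; simp
    set t : Fin n → ℤ := fun k => s.orderEmbOfFin hcard k with htdef
    have hmem : ∀ k, t k ∈ s := fun k => Finset.orderEmbOfFin_mem s hcard k
    have hex : ∀ k, ∃ r, T r = t k := by
      intro k
      have h := hmem k
      rw [hsdef] at h
      simpa using (Finset.mem_image.mp h).imp (fun r hr => hr.2)
    have htmono : StrictMono t := (s.orderEmbOfFin hcard).strictMono
    have p1 : ∀ k l : Fin n, k < l → t k < t l := fun k l h => htmono h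
    have p2 : ∀ k l : Fin n, t k - t l < (n:ℤ) * m := by
      intro k l
      obtain ⟨r, hr⟩ := hex k
      obtain ⟨r', hr'⟩ := hex l
      rw [← hr, ← hr']
      exact g2 r r'
    have p3 : ∀ k l : Fin n, (n:ℤ) ∣ (t k - t l) → k = l := by
      intro k l hd
      obtain ⟨r, hr⟩ := hex k
      obtain ⟨r', hr'⟩ := hex l
      rw [← hr, ← hr'] at hd
      have hrr : r = r' := by
        apply fin_eq_of_dvd
        have e : (r.1:ℤ) - (r'.1:ℤ) = (T r' - (r'.1:ℤ)) - (T r - (r.1:ℤ)) + (T r - T r') := by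
          ring
        rw [e]
        exact dvd_add (dvd_sub (g1 r') (g1 r)) hd
      apply htmono.injective
      rw [← hr, ← hr', hrr]
    have p4 : ∑ k, t k = (∑ k ∈ Finset.range n, (k:ℤ)) * m := by
      have himt : Finset.univ.image t = s := by
        apply Finset.eq_of_subset_of_card_le
        · intro x hx
          obtain ⟨k, _, rfl⟩ := Finset.mem_image.mp hx
          exact hmem k
        · rw [Finset.card_image_of_injective _ htmono.injective]
          simp [hcard]
      have e1 : ∑ x ∈ Finset.univ.image t, x = ∑ k, t k :=
        Finset.sum_image (fun k _ l _ h => htmono.injective h)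
      have e2 : ∑ x ∈ s, x = ∑ r, T r := by
        rw [hsdef]
        exact Finset.sum_image (fun k _ l _ h => hTinj h)
      rw [← e1, himt, e2, g3]
    refine ⟨⟨t, p1, p2, p3, p4⟩, ?_⟩
    apply Subtype.ext
    funext r
    show t ((sortEquiv hn t p3).symm r) = T r
    set k := (sortEquiv hn t p3).symm r with hk
    have hd := sortEquiv_dvd hn t p3 r
    obtain ⟨r', hr'⟩ := hex k
    have hrr : r' = r := by
      apply fin_eq_of_dvd
      have hdd := dvd_sub hd (g1 r')
      rw [hr'] at hdd
      have e : (r'.1:ℤ) - (r.1:ℤ) = (t k - (r.1:ℤ)) - (t k - (r'.1:ℤ)) := by ring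
      rw [e]
      exact hdd
    rw [← hr', hrr]

theorem discrete_ivt (σ : ℤ → ℤ) (N : ℤ) (hN : 0 < N)
    (hstep : ∀ c, σ (c+1) = σ c ∨ σ (c+1) = σ c + N)
    (S : ℤ) (hS : ∀ c, N ∣ σ c - S)
    (hlo : ∃ c, σ c ≤ S) (hhi : ∃ c, S ≤ σ c) : ∃ c, σ c = S := by
  have hmono : ∀ c : ℤ, ∀ k : ℕ, σ c ≤ σ (c + k) := by
    intro c k
    induction k with
    | zero => simp
    | succ k ih =>
        have e : c + ((k:ℤ) + 1) = (c + k) + 1 := by ring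
        push_cast
        rw [e]
        rcases hstep (c + k) with h | h <;> omega
  have claim : ∀ k : ℕ, ∀ c : ℤ, σ c ≤ S → S ≤ σ (c + k) → ∃ c', σ c' = S := by
    intro k
    induction k with
    | zero =>
        intro c h1 h2
        simp at h2
        exact ⟨c, le_antisymm h1 h2⟩
    | succ k ih =>
        intro c h1 h2
        by_cases h : σ (c + 1) ≤ S
        · apply ih (c + 1) h
          have e : c + ((k:ℕ) + 1 : ℕ) = (c + 1) + (k:ℕ) := by push_cast; ring
          rw [e] at h2
          exact h2
        · push_neg at h
          rcases hstep c with hc | hc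
          · omega
          · refine ⟨c, ?_⟩
            have hd := hS c
            have := Int.eq_zero_of_abs_lt_dvd hd (abs_lt.mpr ⟨by omega, by omega⟩)
            omega
  obtain ⟨c₁, h₁⟩ := hlo
  obtain ⟨c₂, h₂⟩ := hhi
  by_cases hcc : c₁ ≤ c₂
  · apply claim (c₂ - c₁).toNat c₁ h₁
    have e : c₁ + ((c₂ - c₁).toNat : ℤ) = c₂ := by omega
    rw [e]
    exact h₂
  · push_neg at hcc
    have := hmono c₂ (c₁ - c₂).toNat
    have e : c₂ + ((c₁ - c₂).toNat : ℤ) = c₁ := by omega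
    rw [e] at this
    exact ⟨c₁, le_antisymm h₁ (le_trans h₂ this)⟩

theorem card_step4 (hm : 0 < m) (hn : 0 < n) (hcop : Nat.Coprime m n) :
    Nat.card {T : Fin n → ℤ //
          (∀ r : Fin n, (n:ℤ) ∣ (T r - (r.1:ℤ))) ∧
          (∀ r s : Fin n, T r - T s < (n:ℤ) * m) ∧
          (∑ r, T r = (∑ k ∈ Finset.range n, (k:ℤ)) * m)}
      = Nat.card {ρ : Fin n → ℤ //
          (∀ r : Fin n, 0 ≤ ρ r ∧ ρ r < (n:ℤ) * m) ∧
          (∀ r : Fin n, (n:ℤ) ∣ (ρ r - (r.1:ℤ))) ∧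
          ((n:ℤ) * m ∣ (∑ r, ρ r) - (∑ k ∈ Finset.range n, (k:ℤ)) * m)} := by
  classical
  set N : ℤ := (n:ℤ) * m with hNdef
  have hN : 0 < N := by positivity
  have hnN : (n:ℤ) ∣ N := ⟨m, rfl⟩
  set SC : ℤ := (∑ k ∈ Finset.range n, (k:ℤ)) * m with hSCdef
  refine Nat.card_eq_of_bijective (fun TT => ⟨fun r => TT.1 r % N, ?_⟩) ⟨?_, ?_⟩
  · obtain ⟨T, g1, g2, g3⟩ := TT
    have hmodsub : ∀ r : Fin n, N ∣ T r % N - T r := by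
      intro r
      have e : T r % N - T r = -(N * (T r / N)) := by
        have := Int.emod_def (T r) N
        omega
      rw [e]
      exact (dvd_mul_right N _).neg_right
    refine ⟨?_, ?_, ?_⟩
    · intro r
      exact ⟨Int.emod_nonneg _ hN.ne', Int.emod_lt_of_pos _ hN⟩
    · intro r
      have e : T r % N - (r.1:ℤ) = (T r - (r.1:ℤ)) + (T r % N - T r) := by ring
      rw [e]
      exact dvd_add (g1 r) (dvd_trans hnN (hmodsub r))
    · have e : (∑ r, T r % N) - SC = ∑ r : Fin n, (T r % N - T r) := by
        rw [Finset.sum_sub_distrib]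
        omega
      rw [e]
      exact Finset.dvd_sum (fun r _ => hmodsub r)
  · -- injectivity
    rintro ⟨T₁, g11, g12, g13⟩ ⟨T₂, g21, g22, g23⟩ he
    have hmod : ∀ r : Fin n, T₁ r % N = T₂ r % N := by
      intro r
      exact congrFun (congrArg Subtype.val he) r
    have hdvd : ∀ r : Fin n, N ∣ T₁ r - T₂ r := by
      intro r
      have h1 : N ∣ T₁ r - T₁ r % N := Int.dvd_self_sub_of_emod_eq rfl
      have h2 : N ∣ T₂ r - T₂ r % N := Int.dvd_self_sub_of_emod_eq rfl
      have e : T₁ r - T₂ r = (T₁ r - T₁ r % N) - (T₂ r - T₂ r % N) := by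
        rw [hmod r]; ring
      rw [e]
      exact dvd_sub h1 h2
    have hsum0 : ∑ r : Fin n, (T₁ r - T₂ r) = 0 := by
      rw [Finset.sum_sub_distrib, g13, g23]
      ring
    apply Subtype.ext
    show T₁ = T₂
    by_contra hne
    have hr₀ : ∃ r, T₁ r ≠ T₂ r := by
      by_contra hall
      push_neg at hall
      exact hne (funext hall)
    obtain ⟨r₀, hr₀⟩ := hr₀
    have hpos : ∃ rp, 0 < T₁ rp - T₂ rp := by
      by_contra hall
      push_neg at hall
      have := (Finset.sum_eq_zero_iff_of_nonpos
        (fun r _ => hall r)).mp hsum0 r₀ (Finset.mem_univ _)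
      omega
    obtain ⟨rp, hrp⟩ := hpos
    have hneg : ∃ rn, T₁ rn - T₂ rn < 0 := by
      by_contra hall
      push_neg at hall
      have := (Finset.sum_eq_zero_iff_of_nonneg
        (fun r _ => hall r)).mp hsum0 rp (Finset.mem_univ _)
      omega
    obtain ⟨rn, hrn⟩ := hneg
    have h1 : N ≤ T₁ rp - T₂ rp := Int.le_of_dvd hrp (hdvd rp)
    have h2 : N ≤ -(T₁ rn - T₂ rn) := Int.le_of_dvd (by omega) (hdvd rn).neg_right
    have h3 := g12 rp rn
    have h4 := g22 rn rp
    omega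
  · -- surjectivity
    rintro ⟨ρ, hb, hd, hs⟩
    set L : ℤ → Fin n → ℤ := fun c r => c + (ρ r - c) % N with hLdef
    have hLlow : ∀ c r, c ≤ L c r := by
      intro c r
      have := Int.emod_nonneg (ρ r - c) hN.ne'
      simp only [hLdef]
      omega
    have hLhigh : ∀ c r, L c r < c + N := by
      intro c r
      have := Int.emod_lt_of_pos (ρ r - c) hN
      simp only [hLdef]
      omega
    have hLdvd : ∀ c r, N ∣ L c r - ρ r := by
      intro c r
      have h0 : N ∣ (ρ r - c) - (ρ r - c) % N := Int.dvd_self_sub_of_emod_eq rfl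
      have e : L c r - ρ r = -((ρ r - c) - (ρ r - c) % N) := by
        simp only [hLdef]; ring
      rw [e]
      exact h0.neg_right
    set σ : ℤ → ℤ := fun c => ∑ r : Fin n, L c r with hσdef
    have hjump : ∀ c (r : Fin n), (ρ r - c) % N = 0 → L (c+1) r = L c r + N := by
      intro c r hA
      obtain ⟨q, hq⟩ : N ∣ ρ r - c := Int.dvd_of_emod_eq_zero hA
      have e1 : ρ r - (c+1) = (N - 1) + N * (q - 1) := by linear_combination hq
      have e2 : (ρ r - (c+1)) % N = N - 1 := by
        rw [e1, Int.add_mul_emod_self_left, Int.emod_eq_of_lt (by omega) (by omega)]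
      simp only [hLdef]
      rw [e2, hA]
      ring
    have hnojump : ∀ c (r : Fin n), (ρ r - c) % N ≠ 0 → L (c+1) r = L c r := by
      intro c r hA
      have hA0 := Int.emod_nonneg (ρ r - c) hN.ne'
      have hAlt := Int.emod_lt_of_pos (ρ r - c) hN
      obtain ⟨q, hq⟩ : N ∣ (ρ r - c) - (ρ r - c) % N := Int.dvd_self_sub_of_emod_eq rfl
      have e1 : ρ r - (c+1) = ((ρ r - c) % N - 1) + N * q := by linear_combination hq
      have e2 : (ρ r - (c+1)) % N = (ρ r - c) % N - 1 := by
        rw [e1, Int.add_mul_emod_self_left, Int.emod_eq_of_lt (by omega) (by omega)]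
      simp only [hLdef]
      rw [e2]
      ring
    have hstep : ∀ c, σ (c+1) = σ c ∨ σ (c+1) = σ c + N := by
      intro c
      by_cases hex : ∃ r, (ρ r - c) % N = 0
      · right
        obtain ⟨r₀, hr₀⟩ := hex
        have hL' : ∀ r : Fin n, L (c+1) r = L c r + (if r = r₀ then N else 0) := by
          intro r
          by_cases hrr : r = r₀
          · subst hrr
            simp only [if_pos rfl]
            exact hjump c r hr₀
          · simp only [if_neg hrr]
            rw [add_zero]
            apply hnojump c r
            intro hz
            apply hrr
            apply fin_eq_of_dvd
            have d1 : N ∣ ρ r - c := Int.dvd_of_emod_eq_zero hz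
            have d2 : N ∣ ρ r₀ - c := Int.dvd_of_emod_eq_zero hr₀
            have d3 : (n:ℤ) ∣ ρ r - ρ r₀ := by
              apply dvd_trans hnN
              have := dvd_sub d1 d2
              simpa using this
            have e : (r.1:ℤ) - (r₀.1:ℤ)
                = (ρ r - ρ r₀) - (ρ r - (r.1:ℤ)) + (ρ r₀ - (r₀.1:ℤ)) := by ring
            rw [e]
            exact dvd_add (dvd_sub d3 (hd r)) (hd r₀)
        show (∑ r : Fin n, L (c+1) r) = (∑ r : Fin n, L c r) + N
        rw [Finset.sum_congr rfl (fun r _ => hL' r), Finset.sum_add_distrib]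
        congr 1
        rw [Finset.sum_ite_eq' Finset.univ r₀ (fun _ => N)]
        simp
      · left
        push_neg at hex
        exact Finset.sum_congr rfl (fun r _ => hnojump c r (hex r))
    have hper : ∀ c, σ (c + N) = σ c + (n:ℤ) * N := by
      intro c
      have hLper : ∀ r : Fin n, L (c + N) r = L c r + N := by
        intro r
        simp only [hLdef]
        have e : ρ r - (c + N) = (ρ r - c) - N := by ring
        rw [e, show ρ r - c - N = (ρ r - c) + N * (-1) by ring, Int.add_mul_emod_self_left]
        ring
      show (∑ r : Fin n, L (c + N) r) = (∑ r : Fin n, L c r) + (n:ℤ) * N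
      rw [Finset.sum_congr rfl (fun r _ => hLper r), Finset.sum_add_distrib,
        Finset.sum_const, Finset.card_univ, Fintype.card_fin, nsmul_eq_mul]
    have hσdvd : ∀ c, N ∣ σ c - SC := by
      intro c
      have h1 : N ∣ σ c - ∑ r, ρ r := by
        have e : σ c - ∑ r : Fin n, ρ r = ∑ r : Fin n, (L c r - ρ r) := by
          rw [Finset.sum_sub_distrib]
        rw [e]
        exact Finset.dvd_sum (fun r _ => hLdvd c r)
      have e : σ c - SC = (σ c - ∑ r, ρ r) + ((∑ r, ρ r) - SC) := by ring
      rw [e]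
      exact dvd_add h1 hs
    have hup : ∀ k : ℕ, σ ((k:ℤ) * N) = σ 0 + (k:ℤ) * ((n:ℤ) * N) := by
      intro k
      induction k with
      | zero => simp
      | succ k ih =>
          push_cast
          rw [show ((k:ℤ)+1) * N = (k:ℤ) * N + N by ring, hper, ih]
          ring
    have hdown : ∀ k : ℕ, σ (-(k:ℤ) * N) = σ 0 - (k:ℤ) * ((n:ℤ) * N) := by
      intro k
      induction k with
      | zero => simp
      | succ k ih =>
          have h := hper (-((k:ℤ)+1) * N)
          rw [show -((k:ℤ)+1) * N + N = -(k:ℤ) * N by ring, ih] at h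
          push_cast
          have e2 : ((k:ℤ)+1) * ((n:ℤ) * N) = (k:ℤ) * ((n:ℤ) * N) + (n:ℤ) * N := by ring
          omega
    have hnN1 : (1:ℤ) ≤ (n:ℤ) * N := by
      have h1 : (1:ℤ) ≤ n := by exact_mod_cast hn
      nlinarith
    have hlo : ∃ c, σ c ≤ SC := by
      set k := (σ 0 - SC).toNat with hkd
      refine ⟨-(k:ℤ) * N, ?_⟩
      rw [hdown k]
      have hk : (σ 0 - SC) ≤ (k:ℤ) := Int.self_le_toNat _
      have hkk : (k:ℤ) * 1 ≤ (k:ℤ) * ((n:ℤ) * N) :=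
        mul_le_mul_of_nonneg_left hnN1 (by positivity)
      rw [mul_one] at hkk
      omega
    have hhi : ∃ c, SC ≤ σ c := by
      set k := (SC - σ 0).toNat with hkd
      refine ⟨(k:ℤ) * N, ?_⟩
      rw [hup k]
      have hk : (SC - σ 0) ≤ (k:ℤ) := Int.self_le_toNat _
      have hkk : (k:ℤ) * 1 ≤ (k:ℤ) * ((n:ℤ) * N) :=
        mul_le_mul_of_nonneg_left hnN1 (by positivity)
      rw [mul_one] at hkk
      omega
    obtain ⟨c, hc⟩ := discrete_ivt σ N hN hstep SC hσdvd hlo hhi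
    refine ⟨⟨fun r => L c r, ?_, ?_, ?_⟩, ?_⟩
    · intro r
      show (n:ℤ) ∣ L c r - (r.1:ℤ)
      have e : L c r - (r.1:ℤ) = (L c r - ρ r) + (ρ r - (r.1:ℤ)) := by ring
      rw [e]
      exact dvd_add (dvd_trans hnN (hLdvd c r)) (hd r)
    · intro r s
      show L c r - L c s < (n:ℤ) * m
      have := hLlow c s
      have := hLhigh c r
      omega
    · exact hc
    · apply Subtype.ext
      funext r
      show L c r % N = ρ r
      obtain ⟨q, hq⟩ := hLdvd c r
      have h2 := hb r
      rw [show L c r = ρ r + N * q by omega, Int.add_mul_emod_self_left,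
        Int.emod_eq_of_lt h2.1 h2.2]

theorem gauss_range (n : ℕ) : 2 * (∑ k ∈ Finset.range n, (k:ℤ)) = n * ((n:ℤ) - 1) := by
  cases n with
  | zero => simp
  | succ k =>
      have h := Finset.sum_range_id_mul_two (k+1)
      have h2 : ((∑ i ∈ Finset.range (k+1), i : ℕ) : ℤ) = ∑ i ∈ Finset.range (k+1), (i:ℤ) := by
        push_cast
        rfl
      have h3 : ((k:ℤ)+1) - 1 = k := by ring
      push_cast
      rw [h3]
      have h4 : ((∑ i ∈ Finset.range (k+1), i) * 2 : ℕ) = (k+1) * k := by simpa using h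
      have h5 : ((∑ i ∈ Finset.range (k+1), i : ℕ) : ℤ) * 2 = ((k:ℤ)+1) * k := by
        exact_mod_cast h4
      rw [h2] at h5
      linarith

theorem dvd_parity (hm : 0 < m) (hn : 0 < n) (hcop : Nat.Coprime m n) :
    (n:ℤ) ∣ (∑ k ∈ Finset.range n, (k:ℤ)) * ((m:ℤ) - 1) := by
  set G : ℤ := ∑ k ∈ Finset.range n, (k:ℤ) with hGdef
  have hG := gauss_range n
  rcases Nat.even_or_odd m with ⟨j, hj⟩ | ⟨j, hj⟩
  · -- m even, so n is odd
    have h2m : 2 ∣ m := ⟨j, by omega⟩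
    have h2n : ¬ (2 ∣ n) := by
      intro h2n
      have := Nat.dvd_gcd h2m h2n
      rw [hcop] at this
      omega
    obtain ⟨i, hi⟩ : ∃ i, n = 2 * i + 1 := ⟨n / 2, by omega⟩
    have hni : G = (n:ℤ) * i := by
      have e : (n:ℤ) * ((n:ℤ) - 1) = 2 * ((n:ℤ) * i) := by
        rw [show ((n:ℤ) - 1) = 2 * i by push_cast [hi]; ring]
        ring
      omega
    exact ⟨(i:ℤ) * ((m:ℤ) - 1), by rw [hni]; ring⟩
  · -- m odd
    have hj' : (m:ℤ) = 2 * j + 1 := by push_cast [hj]; ring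
    refine ⟨((n:ℤ) - 1) * j, ?_⟩
    linear_combination (j:ℤ) * hG + G * hj'

theorem card_step5 (hm : 0 < m) (hn : 0 < n) (hcop : Nat.Coprime m n) {E : ℤ}
    (hE : (n:ℤ) * E = (∑ k ∈ Finset.range n, (k:ℤ)) * ((m:ℤ) - 1)) :
    Nat.card {ρ : Fin n → ℤ //
          (∀ r : Fin n, 0 ≤ ρ r ∧ ρ r < (n:ℤ) * m) ∧
          (∀ r : Fin n, (n:ℤ) ∣ (ρ r - (r.1:ℤ))) ∧
          ((n:ℤ) * m ∣ (∑ r, ρ r) - (∑ k ∈ Finset.range n, (k:ℤ)) * m)}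
      = Nat.card {x : Fin n → ℤ //
          (∀ r : Fin n, 0 ≤ x r ∧ x r < (m:ℤ)) ∧
          ((m:ℤ) ∣ (∑ r, x r) - E)} := by
  classical
  have npos : (0:ℤ) < n := by exact_mod_cast hn
  set G : ℤ := ∑ k ∈ Finset.range n, (k:ℤ) with hGdef
  have hGsum : ∑ r : Fin n, ((r.1:ℕ):ℤ) = G := Fin.sum_univ_eq_sum_range (fun k => (k:ℤ)) n
  have hkey : ∀ x : Fin n → ℤ,
      (∑ r : Fin n, ((r.1:ℤ) + (n:ℤ) * x r)) - G * m = (n:ℤ) * ((∑ r, x r) - E) := by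
    intro x
    rw [Finset.sum_add_distrib, ← Finset.mul_sum, hGsum]
    linear_combination hE
  symm
  refine Nat.card_eq_of_bijective
    (fun xx => ⟨fun r => (r.1:ℤ) + (n:ℤ) * xx.1 r, ?_⟩) ⟨?_, ?_⟩
  · obtain ⟨x, hxb, hxd⟩ := xx
    dsimp only
    refine ⟨?_, ?_, ?_⟩
    · intro r
      have h1 := (hxb r).1
      have h2 := (hxb r).2
      have h3 : (n:ℤ) * x r ≤ (n:ℤ) * ((m:ℤ) - 1) := by
        apply mul_le_mul_of_nonneg_left (by omega) npos.le
      have h4 : (0:ℤ) ≤ (n:ℤ) * x r := mul_nonneg npos.le h1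
      have h5 : (n:ℤ) * ((m:ℤ) - 1) = (n:ℤ) * m - n := by ring
      have h6 := r.2
      constructor
      · have : (0:ℤ) ≤ (r.1:ℤ) := by positivity
        omega
      · have : (r.1:ℤ) < n := by exact_mod_cast h6
        omega
    · intro r
      exact ⟨x r, by ring⟩
    · rw [hkey x]
      exact mul_dvd_mul_left _ hxd
  · intro x₁ x₂ he
    apply Subtype.ext
    funext r
    have h := congrFun (congrArg Subtype.val he) r
    simp only at h
    have : (n:ℤ) * x₁.1 r = (n:ℤ) * x₂.1 r := by omega
    exact mul_left_cancel₀ npos.ne' this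
  · rintro ⟨ρ, hb, hd, hs⟩
    set x : Fin n → ℤ := fun r => (ρ r - (r.1:ℤ)) / n with hxdef
    have hxe : ∀ r, (n:ℤ) * x r = ρ r - (r.1:ℤ) := by
      intro r
      exact Int.mul_ediv_cancel' (hd r)
    have hρx : ∀ r, ρ r = (r.1:ℤ) + (n:ℤ) * x r := by
      intro r
      rw [hxe r]
      ring
    have hxb : ∀ r : Fin n, 0 ≤ x r ∧ x r < (m:ℤ) := by
      intro r
      have h1 := (hb r).1
      have h2 := (hb r).2
      have h3 : (r.1:ℤ) < n := by exact_mod_cast r.2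
      have h4 : (0:ℤ) ≤ (r.1:ℤ) := by positivity
      constructor
      · by_contra hneg
        push_neg at hneg
        have : (n:ℤ) * x r ≤ (n:ℤ) * (-1) :=
          mul_le_mul_of_nonneg_left (by omega) npos.le
        rw [hxe r] at this
        omega
      · have : (n:ℤ) * x r < (n:ℤ) * m := by
          rw [hxe r]
          omega
        exact lt_of_mul_lt_mul_left this npos.le
    have hxs : (m:ℤ) ∣ (∑ r, x r) - E := by
      have h1 : (∑ r : Fin n, ρ r) - G * m = (n:ℤ) * ((∑ r, x r) - E) := by
        rw [Finset.sum_congr rfl (fun r _ => hρx r)] at hs ⊢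
        exact hkey x
      rw [h1] at hs
      exact (mul_dvd_mul_iff_left npos.ne').mp hs
    refine ⟨⟨x, hxb, hxs⟩, ?_⟩
    apply Subtype.ext
    funext r
    exact (hρx r).symm

theorem card_step6 (hm : 0 < m) (hn : 0 < n) (E : ℤ) :
    Nat.card {x : Fin n → ℤ //
          (∀ r : Fin n, 0 ≤ x r ∧ x r < (m:ℤ)) ∧
          ((m:ℤ) ∣ (∑ r, x r) - E)} = m ^ (n - 1) := by
  classical
  have mpos : (0:ℤ) < m := by exact_mod_cast hm
  set z : Fin n := ⟨0, hn⟩ with hzdef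
  have hcard : Nat.card ({r : Fin n // r ≠ z} → Fin m) = m ^ (n-1) := by
    rw [Nat.card_eq_fintype_card, Fintype.card_fun, Fintype.card_fin]
    congr 1
    rw [Fintype.card_subtype_compl, Fintype.card_subtype_eq, Fintype.card_fin]
  rw [← hcard]
  refine Nat.card_eq_of_bijective
    (fun x => fun r => ⟨(x.1 r.1).toNat, by
      have h1 := (x.2.1 r.1).1
      have h2 := (x.2.1 r.1).2
      omega⟩) ⟨?_, ?_⟩
  · rintro ⟨x₁, hx1b, hx1s⟩ ⟨x₂, hx2b, hx2s⟩ he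
    have hvals : ∀ (r : Fin n) (hr : r ≠ z), (x₁ r).toNat = (x₂ r).toNat :=
      fun r hr => congrArg Fin.val (congrFun he ⟨r, hr⟩)
    clear he
    apply Subtype.ext
    simp only
    have hoff : ∀ r : Fin n, r ≠ z → x₁ r = x₂ r := by
      intro r hr
      have h' := hvals r hr
      have h1 := (hx1b r).1
      have h2 := (hx2b r).1
      omega
    have hsplit : ∀ x : Fin n → ℤ, ∑ r, x r = x z + ∑ r ∈ Finset.univ.erase z, x r := by
      intro x
      rw [Finset.add_sum_erase _ x (Finset.mem_univ z)]
    have herase : ∑ r ∈ Finset.univ.erase z, x₁ r = ∑ r ∈ Finset.univ.erase z, x₂ r := by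
      apply Finset.sum_congr rfl
      intro r hr
      exact hoff r (Finset.mem_erase.mp hr).1
    have hdvd : (m:ℤ) ∣ x₁ z - x₂ z := by
      have e : x₁ z - x₂ z = ((∑ r, x₁ r) - E) - ((∑ r, x₂ r) - E) := by
        rw [hsplit x₁, hsplit x₂, herase]
        ring
      rw [e]
      exact dvd_sub hx1s hx2s
    have hz : x₁ z = x₂ z := by
      have h1 := (hx1b z).1
      have h2 := (hx1b z).2
      have h3 := (hx2b z).1
      have h4 := (hx2b z).2
      have := Int.eq_zero_of_abs_lt_dvd hdvd (abs_lt.mpr ⟨by omega, by omega⟩)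
      omega
    funext r
    by_cases hr : r = z
    · rw [hr, hz]
    · exact hoff r hr
  · intro β
    set β' : Fin n → ℤ := fun r => if h : r = z then 0 else ((β ⟨r, h⟩ : Fin m).1 : ℤ) with hβ'def
    set B : ℤ := ∑ r ∈ Finset.univ.erase z, β' r with hBdef
    set x : Fin n → ℤ := fun r => if h : r = z then (E - B) % m else β' r with hxdef
    have hxoff : ∀ r (hr : r ≠ z), x r = ((β ⟨r, hr⟩ : Fin m).1 : ℤ) := by
      intro r hr
      simp only [hxdef, hβ'def, dif_neg hr]
    have hxb : ∀ r : Fin n, 0 ≤ x r ∧ x r < (m:ℤ) := by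
      intro r
      by_cases hr : r = z
      · subst hr
        simp only [hxdef, dif_pos rfl]
        exact ⟨Int.emod_nonneg _ mpos.ne', Int.emod_lt_of_pos _ mpos⟩
      · rw [hxoff r hr]
        have := (β ⟨r, hr⟩).2
        constructor
        · positivity
        · exact_mod_cast this
    have hxs : (m:ℤ) ∣ (∑ r, x r) - E := by
      have hsplit : ∑ r, x r = x z + ∑ r ∈ Finset.univ.erase z, x r :=
        (Finset.add_sum_erase _ x (Finset.mem_univ z)).symm
      have herase : ∑ r ∈ Finset.univ.erase z, x r = B := by
        rw [hBdef]
        apply Finset.sum_congr rfl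
        intro r hr
        have hrz := (Finset.mem_erase.mp hr).1
        simp only [hxdef, dif_neg hrz]
      have hxz : x z = (E - B) % m := by simp only [hxdef, dif_pos rfl]
      rw [hsplit, herase, hxz]
      have hmd := Int.emod_def (E - B) (m:ℤ)
      refine ⟨-((E - B) / m), ?_⟩
      have hr : (m:ℤ) * -((E - B) / m) = -((m:ℤ) * ((E - B) / m)) := by ring
      omega
    refine ⟨⟨x, hxb, hxs⟩, ?_⟩
    funext r
    apply Fin.ext
    obtain ⟨r, hr⟩ := r
    simp only
    rw [hxoff r hr]
    simp

theorem card_step1 (hm : 0 < m) (hn : 0 < n) :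
    Nat.card {w : AffinePerm n //
        ∀ i j : ℤ, i < j → w.toEquiv i - w.toEquiv j ≠ (m : ℤ)}
      = Nat.card {u : AffinePerm n // ∀ b : ℤ, u.toEquiv b < u.toEquiv (b + m)} := by
  refine Nat.card_eq_of_bijective (fun w => ⟨invPerm hn w.1, ?_⟩) ⟨?_, ?_⟩
  · exact (cond_iff_mstable hm w.1).mp w.2
  · intro w₁ w₂ he
    apply Subtype.ext
    apply AffinePerm.ext'
    have h : w₁.1.toEquiv.symm = w₂.1.toEquiv.symm :=
      congrArg (fun u : AffinePerm n => u.toEquiv) (congrArg Subtype.val he)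
    rw [← Equiv.symm_symm w₁.1.toEquiv, h, Equiv.symm_symm]
  · intro u
    refine ⟨⟨invPerm hn u.1, ?_⟩, ?_⟩
    · apply (cond_iff_mstable hm (invPerm hn u.1)).mpr
      intro b
      have e : (invPerm hn u.1).toEquiv.symm = u.1.toEquiv := Equiv.symm_symm _
      rw [e]
      exact u.2 b
    · apply Subtype.ext
      exact invPerm_invPerm hn u.1

end SommersAux

/-- For `m`, `n` coprime, the number of affine permutations `w` whose inverse
lies in the Sommers region `S_m^n` (equivalently, `w(i) - w(j) ≠ m` for all
`i < j`) is `m^(n-1)`. -/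
theorem card_sommers_region (m n : ℕ) (hm : 0 < m) (hn : 0 < n)
    (hcop : Nat.Coprime m n) :
    Nat.card {w : AffinePerm n //
      ∀ i j : ℤ, i < j → w.toEquiv i - w.toEquiv j ≠ (m : ℤ)} = m ^ (n - 1) := by
  obtain ⟨E, hEd⟩ := SommersAux.dvd_parity hm hn hcop
  have hE : (n:ℤ) * E = (∑ k ∈ Finset.range n, (k:ℤ)) * ((m:ℤ) - 1) := hEd.symm
  rw [SommersAux.card_step1 hm hn, SommersAux.card_step2 hm hn hcop,
    SommersAux.card_step3 hm hn hcop, SommersAux.card_step4 hm hn hcop,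
    SommersAux.card_step5 hm hn hcop hE, SommersAux.card_step6 hm hn E]
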